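/- arXiv:cs/0512091 — 2 statements merged into one kernel-verified Lean document; each statement's English description precedes it below -/
import Mathlib

section
/- Let A, B, C be real numbers with A > 0, B > 0, C > 0 and A + B + 1 ≤ C. Then log₂(A/(B+C+1)) + log₂(B/C) − log₂(A/B) − log₂((A+B+1)/C) < −1. (Equivalently, log₂(B/(A+B+1)) + log₂(B/(B+C+1)) < −1.) -/
/-- The potential change of a "zig" step in the flarb analysis:
if `A`, `B`, `C` are positive reals with `A + B + 1 ≤ C` (the edge is light), then
`log₂(A/(B+C+1)) + log₂(B/C) − log₂(A/B) − log₂((A+B+1)/C) < −1`, equivalently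
`log₂(B/(A+B+1)) + log₂(B/(B+C+1)) < −1`. -/
theorem zig_potential_drop (A B C : ℝ) (hA : 0 < A) (hB : 0 < B) (hC : 0 < C)
    (hlight : A + B + 1 ≤ C) :
    Real.logb 2 (A / (B + C + 1)) + Real.logb 2 (B / C)
      - Real.logb 2 (A / B) - Real.logb 2 ((A + B + 1) / C) < -1 ∧
    Real.logb 2 (B / (A + B + 1)) + Real.logb 2 (B / (B + C + 1)) < -1 := by
  have hAB1 : (0:ℝ) < A + B + 1 := by linarith
  have hBC1 : (0:ℝ) < B + C + 1 := by linarith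
  have h1 : Real.logb 2 (B / (A + B + 1)) < 0 := by
    have hlt : B / (A + B + 1) < 1 := by rw [div_lt_one hAB1]; linarith
    exact Real.logb_neg one_lt_two (by positivity) hlt
  have h2 : Real.logb 2 (B / (B + C + 1)) < -1 := by
    rw [Real.logb_lt_iff_lt_rpow one_lt_two (by positivity)]
    rw [Real.rpow_neg_one, div_lt_iff₀ hBC1, inv_mul_eq_div, lt_div_iff₀ two_pos]
    linarith
  have hkey : Real.logb 2 (B / (A + B + 1)) + Real.logb 2 (B / (B + C + 1)) < -1 := by
    linarith
  refine ⟨?_, hkey⟩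
  have heq : Real.logb 2 (A / (B + C + 1)) + Real.logb 2 (B / C)
      - Real.logb 2 (A / B) - Real.logb 2 ((A + B + 1) / C)
      = Real.logb 2 (B / (A + B + 1)) + Real.logb 2 (B / (B + C + 1)) := by
    rw [Real.logb_div hA.ne' hBC1.ne', Real.logb_div hB.ne' hC.ne',
      Real.logb_div hA.ne' hB.ne', Real.logb_div hAB1.ne' hC.ne',
      Real.logb_div hB.ne' hAB1.ne', Real.logb_div hB.ne' hBC1.ne']
    ring
  rw [heq]; exact hkey
end

section
/- Let C, D, E, F be positive real numbers, let k be a natural number, and let B₁, …, B_k be positive real numbers with S = B₁ + ⋯ + B_k. Then log₂(C/(D+E+F+2)) + log₂(D/(E+F+1)) + log₂(E/F) − log₂((S+C+D+E+k+2)/F) − log₂((C+D+1)/E) − log₂(C/D) < −1. Equivalently, D²·E² / ((D+E+F+2)·(E+F+1)·(S+C+D+E+k+2)·(C+D+1)) < 1/2. -/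
set_option maxHeartbeats 1000000


open Finset in
/-- The potential change of a "zag" step in the flarb analysis:
for positive reals `C, D, E, F` and positive reals `B₁, …, B_k` with sum `S`,
`log₂(C/(D+E+F+2)) + log₂(D/(E+F+1)) + log₂(E/F) − log₂((S+C+D+E+k+2)/F)
 − log₂((C+D+1)/E) − log₂(C/D) < −1`, equivalently
`D²·E² / ((D+E+F+2)·(E+F+1)·(S+C+D+E+k+2)·(C+D+1)) < 1/2`. -/
theorem zag_potential_drop (C D E F : ℝ) (hC : 0 < C) (hD : 0 < D) (hE : 0 < E) (hF : 0 < F)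
    (k : ℕ) (B : Fin k → ℝ) (hB : ∀ i, 0 < B i) (S : ℝ) (hS : S = ∑ i, B i) :
    Real.logb 2 (C / (D + E + F + 2)) + Real.logb 2 (D / (E + F + 1)) + Real.logb 2 (E / F)
      - Real.logb 2 ((S + C + D + E + k + 2) / F)
      - Real.logb 2 ((C + D + 1) / E) - Real.logb 2 (C / D) < -1 ∧
    D ^ 2 * E ^ 2 /
      ((D + E + F + 2) * (E + F + 1) * (S + C + D + E + k + 2) * (C + D + 1)) < 1 / 2 := by
  have hS0 : 0 ≤ S := by
    rw [hS]; exact Finset.sum_nonneg fun i _ => (hB i).le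
  have hk : (0:ℝ) ≤ (k:ℝ) := Nat.cast_nonneg k
  have h1 : 0 < D + E + F + 2 := by linarith
  have h2 : 0 < E + F + 1 := by linarith
  have h3 : 0 < S + C + D + E + (k:ℝ) + 2 := by linarith
  have h4 : 0 < C + D + 1 := by linarith
  have hP : 0 < (D + E + F + 2) * (E + F + 1) * (S + C + D + E + (k:ℝ) + 2) * (C + D + 1) :=
    by positivity
  have key : D ^ 2 * E ^ 2 /
      ((D + E + F + 2) * (E + F + 1) * (S + C + D + E + (k:ℝ) + 2) * (C + D + 1)) < 1 / 2 := by
    rw [div_lt_iff₀ hP]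
    have h5 : (0:ℝ) < D * E := mul_pos hD hE
    have a1 : 4 * (D * E) ≤ (D + E + 2) ^ 2 := by nlinarith [sq_nonneg (D - E)]
    have a2 : D * E < (E + 1) * (D + 1) := by nlinarith
    have c1 : (D * E) * (D * E) < (D * E) * ((E + 1) * (D + 1)) :=
      mul_lt_mul_of_pos_left a2 h5
    have c2 : 4 * (D * E) * ((E + 1) * (D + 1)) ≤ (D + E + 2) ^ 2 * ((E + 1) * (D + 1)) :=
      mul_le_mul_of_nonneg_right a1 (by positivity)
    have step : 2 * (D ^ 2 * E ^ 2) < (D + E + 2) * (E + 1) * (D + E + 2) * (D + 1) := by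
      linarith [c1, c2, mul_pos h5 h5]
    have mono : (D + E + 2) * (E + 1) * (D + E + 2) * (D + 1) ≤
        (D + E + F + 2) * (E + F + 1) * (S + C + D + E + (k:ℝ) + 2) * (C + D + 1) := by
      have m1 : D + E + 2 ≤ D + E + F + 2 := by linarith
      have m2 : E + 1 ≤ E + F + 1 := by linarith
      have m3 : D + E + 2 ≤ S + C + D + E + (k:ℝ) + 2 := by linarith
      have m4 : D + 1 ≤ C + D + 1 := by linarith
      exact mul_le_mul (mul_le_mul (mul_le_mul m1 m2 (by linarith) (by linarith))
        m3 (by linarith) (by positivity)) m4 (by linarith) (by positivity)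
    linarith
  refine ⟨?_, key⟩
  have hlog : Real.logb 2 (C / (D + E + F + 2)) + Real.logb 2 (D / (E + F + 1)) +
      Real.logb 2 (E / F) - Real.logb 2 ((S + C + D + E + k + 2) / F)
      - Real.logb 2 ((C + D + 1) / E) - Real.logb 2 (C / D)
      = Real.logb 2 (D ^ 2 * E ^ 2 /
        ((D + E + F + 2) * (E + F + 1) * (S + C + D + E + (k:ℝ) + 2) * (C + D + 1))) := by
    rw [Real.logb_div hC.ne' h1.ne', Real.logb_div hD.ne' h2.ne',
      Real.logb_div hE.ne' hF.ne', Real.logb_div h3.ne' hF.ne',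
      Real.logb_div h4.ne' hE.ne', Real.logb_div hC.ne' hD.ne',
      Real.logb_div (by positivity) hP.ne',
      Real.logb_mul (by positivity) h4.ne',
      Real.logb_mul (by positivity) h3.ne',
      Real.logb_mul h1.ne' h2.ne',
      Real.logb_mul (by positivity) (by positivity),
      show D ^ 2 = D * D by ring, show E ^ 2 = E * E by ring,
      Real.logb_mul hD.ne' hD.ne', Real.logb_mul hE.ne' hE.ne']
    ring
  rw [hlog]
  have : Real.logb 2 (1/2 : ℝ) = -1 := by
    rw [show (1/2 : ℝ) = 2⁻¹ by norm_num, Real.logb_inv, Real.logb_self_eq_one] <;> norm_num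
  calc Real.logb 2 (D ^ 2 * E ^ 2 /
        ((D + E + F + 2) * (E + F + 1) * (S + C + D + E + (k:ℝ) + 2) * (C + D + 1)))
      < Real.logb 2 (1/2) := Real.logb_lt_logb one_lt_two (by positivity) key
    _ = -1 := this
end
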